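/- The derivative of u(p) = λ Σ_{i=1}^{λ} w_i C(λ−1,i−1) p^{i−1}(1−p)^{λ−i} is u'(p) = λ(λ−1) Σ_{k=1}^{λ−1} (w_{k+1} − w_k) C(λ−2,k−1) p^{k−1} (1−p)^{λ−1−k} for all p ∈ (0,1). -/

import Mathlib

open Finset

/-- The derivative of `u(p) = λ ∑_{i=1}^{λ} w_i C(λ-1,i-1) p^{i-1}(1-p)^{λ-i}` at
`p ∈ (0,1)` is `λ(λ-1) ∑_{k=1}^{λ-1} (w_{k+1} - w_k) C(λ-2,k-1) p^{k-1} (1-p)^{λ-1-k}`. -/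
theorem stmt_4 (lam : ℕ) (hlam : 2 ≤ lam) (w : Fin lam → ℝ)
    (p : ℝ) (hp : p ∈ Set.Ioo (0:ℝ) 1) :
    HasDerivAt (fun t : ℝ => (lam : ℝ) *
        ∑ i : Fin lam, w i * (Nat.choose (lam - 1) i : ℝ) * t ^ (i : ℕ) * (1 - t) ^ (lam - 1 - i))
      ((lam : ℝ) * ((lam : ℝ) - 1) *
        ∑ k : Fin (lam - 1),
          (w ⟨(k : ℕ) + 1, by have := k.isLt; omega⟩ - w ⟨(k : ℕ), by have := k.isLt; omega⟩) *
          (Nat.choose (lam - 2) k : ℝ) * p ^ (k : ℕ) * (1 - p) ^ (lam - 2 - k))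
      p := by
  obtain ⟨N, rfl⟩ : ∃ N, lam = N + 2 := ⟨lam - 2, by omega⟩
  set A : ℕ → ℝ := fun i => if h : i < N + 2 then w ⟨i, h⟩ else 0 with hA
  have hfun : (fun t : ℝ => ((N+2 : ℕ) : ℝ) *
      ∑ i : Fin (N+2), w i * (Nat.choose (N+2-1) i : ℝ) * t ^ (i:ℕ) * (1-t) ^ (N+2-1-(i:ℕ)))
      = fun t : ℝ => ((N+2:ℕ):ℝ) * ∑ i ∈ Finset.range (N+2),
        A i * (Nat.choose (N+1) i : ℝ) * t ^ i * (1-t) ^ (N+1-i) := by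
    funext t
    congr 1
    rw [← Fin.sum_univ_eq_sum_range]
    refine Finset.sum_congr rfl fun i _ => ?_
    have hi := i.isLt
    simp [hA, dif_pos hi]
  have key : ∀ i ∈ Finset.range (N+2), HasDerivAt
      (fun t : ℝ => A i * (Nat.choose (N+1) i : ℝ) * t ^ i * (1-t) ^ (N+1-i))
      (A i * (Nat.choose (N+1) i : ℝ) *
        ((i : ℝ) * p ^ (i-1) * (1-p) ^ (N+1-i)
          + p ^ i * (((N+1-i : ℕ) : ℝ) * (1-p) ^ (N+1-i-1) * (-1)))) p := by
    intro i _
    have h1 : HasDerivAt (fun t : ℝ => 1 - t) (-1) p := by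
      simpa using (hasDerivAt_id p).const_sub 1
    have h2 := (hasDerivAt_pow i p).fun_mul (h1.fun_pow (N+1-i))
    have h3 := h2.const_mul (A i * (Nat.choose (N+1) i : ℝ))
    convert h3 using 2 with t
    · rfl
    · rfl
    ring
  have hsum := (HasDerivAt.fun_sum key).const_mul ((N+2:ℕ):ℝ)
  rw [hfun]
  convert hsum using 1
  · rfl
  · rfl
  -- LHS Fin sum to range sum
  have hL : ∑ k : Fin (N+2-1),
        (w ⟨(k : ℕ) + 1, by have := k.isLt; omega⟩ - w ⟨(k : ℕ), by have := k.isLt; omega⟩) *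
          (Nat.choose (N+2-2) k : ℝ) * p ^ (k : ℕ) * (1 - p) ^ (N+2-2-(k:ℕ))
      = ∑ k ∈ Finset.range (N+1),
        (A (k+1) - A k) * (Nat.choose N k : ℝ) * p ^ k * (1-p) ^ (N-k) := by
    have h := Fin.sum_univ_eq_sum_range
      (fun k => (A (k+1) - A k) * (Nat.choose N k : ℝ) * p ^ k * (1-p) ^ (N-k)) (N+1)
    rw [← h]
    apply Finset.sum_congr rfl
    intro k _
    have h1 : (k:ℕ) + 1 < N + 2 := by omega
    have h2 : (k:ℕ) < N + 2 := by omega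
    simp [hA, dif_pos h1, dif_pos h2, Nat.add_sub_cancel]
  rw [hL]
  -- main sum identity
  have hD : ∑ i ∈ Finset.range (N+2),
      A i * (Nat.choose (N+1) i : ℝ) *
        ((i : ℝ) * p ^ (i-1) * (1-p) ^ (N+1-i)
          + p ^ i * (((N+1-i : ℕ) : ℝ) * (1-p) ^ (N+1-i-1) * (-1)))
      = ((N:ℝ)+1) * ∑ k ∈ Finset.range (N+1),
        (A (k+1) - A k) * (Nat.choose N k : ℝ) * p ^ k * (1-p) ^ (N-k) := by
    have e1 : ∑ i ∈ Finset.range (N+2),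
        A i * (Nat.choose (N+1) i : ℝ) *
          ((i : ℝ) * p ^ (i-1) * (1-p) ^ (N+1-i)
            + p ^ i * (((N+1-i : ℕ) : ℝ) * (1-p) ^ (N+1-i-1) * (-1)))
        = (∑ i ∈ Finset.range (N+2),
            A i * (Nat.choose (N+1) i : ℝ) * ((i : ℝ) * p ^ (i-1) * (1-p) ^ (N+1-i)))
          + ∑ i ∈ Finset.range (N+2),
            A i * (Nat.choose (N+1) i : ℝ) *
              (p ^ i * (((N+1-i : ℕ) : ℝ) * (1-p) ^ (N+1-i-1) * (-1))) := by
      rw [← Finset.sum_add_distrib]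
      exact Finset.sum_congr rfl fun i _ => by ring
    rw [e1, Finset.sum_range_succ' _ (N+1), Finset.sum_range_succ _ (N+1), Finset.mul_sum]
    simp only [Nat.sub_self, Nat.cast_zero, zero_mul, mul_zero, add_zero]
    rw [← Finset.sum_add_distrib]
    refine Finset.sum_congr rfl fun k hk => ?_
    have hkN : k ≤ N := by simpa [Nat.lt_succ_iff] using Finset.mem_range.mp hk
    have hc1 : ((N+1).choose (k+1) * (k+1) : ℕ) = (N+1) * N.choose k :=
      (Nat.add_one_mul_choose_eq N k).symm
    have hc2 : ((N+1).choose k * (N+1-k) : ℕ) = (N+1) * N.choose k := by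
      rw [← Nat.choose_succ_right_eq]; exact hc1
    have hc1' : (((N+1).choose (k+1) : ℕ) : ℝ) * ((k:ℝ)+1) = ((N:ℝ)+1) * (N.choose k : ℝ) := by
      exact_mod_cast congrArg (Nat.cast (R := ℝ)) hc1
    have hc2' : (((N+1).choose k : ℕ) : ℝ) * (((N+1-k : ℕ)):ℝ) = ((N:ℝ)+1) * (N.choose k : ℝ) := by
      exact_mod_cast congrArg (Nat.cast (R := ℝ)) hc2
    have he1 : N + 1 - (k+1) = N - k := by omega
    have he2 : (k+1) - 1 = k := rfl
    have he3 : N + 1 - k - 1 = N - k := by omega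
    rw [he1, he2, he3]
    push_cast
    linear_combination (A (k+1) * p^k * (1-p)^(N-k)) * hc1'
      - (A k * p^k * (1-p)^(N-k)) * hc2'
  rw [hD]
  push_cast
  ring
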